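/- Let (X,⊥) be a point-closed orthogonality space. Call a map Λ : C(X,⊥) → C(X,⊥) an ortholattice automorphism if Λ is a bijection such that for all orthoclosed A, B one has A ⊆ B iff Λ(A) ⊆ Λ(B), and Λ(A^⊥) = Λ(A)^⊥. Then for every automorphism φ of (X,⊥) the map φ̄ : C(X,⊥) → C(X,⊥), A ↦ {φ(e) : e ∈ A}, is an ortholattice automorphism of C(X,⊥), and the assignment φ ↦ φ̄ is a group isomorphism from Aut(X,⊥) onto the group of all ortholattice automorphisms of C(X,⊥). -/

import Mathlib

variable {X : Type*}

/-- The orthocomplement of a subset of an orthogonality space. -/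
def ortho (perp : X → X → Prop) (A : Set X) : Set X := {e | ∀ a ∈ A, perp e a}

/-- A subset is orthoclosed if it coincides with its double orthocomplement. -/
def OrthoClosed (perp : X → X → Prop) (A : Set X) : Prop :=
  ortho perp (ortho perp A) = A

variable (perp : X → X → Prop)

/-- The collection `C(X, ⊥)` of orthoclosed subsets. -/
def COS : Type _ := {A : Set X // OrthoClosed perp A}

lemma subset_ortho_ortho (hsymm : ∀ x y : X, perp x y → perp y x) (A : Set X) :
    A ⊆ ortho perp (ortho perp A) :=
  fun e he b hb => hsymm b e (hb e he)

lemma ortho_antitone {A B : Set X} (h : A ⊆ B) : ortho perp B ⊆ ortho perp A :=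
  fun e he a ha => he a (h ha)

lemma ortho_triple (hsymm : ∀ x y : X, perp x y → perp y x) (A : Set X) :
    ortho perp (ortho perp (ortho perp A)) = ortho perp A :=
  Set.Subset.antisymm (ortho_antitone perp (subset_ortho_ortho perp hsymm A))
    (subset_ortho_ortho perp hsymm (ortho perp A))

/-- The orthocomplementation on `C(X, ⊥)`. -/
def orthoCOS (hsymm : ∀ x y : X, perp x y → perp y x) (A : COS perp) : COS perp :=
  ⟨ortho perp A.1, ortho_triple perp hsymm A.1⟩

/-- An ortholattice automorphism of `C(X, ⊥)`: a bijection which preserves and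
reflects inclusion and commutes with orthocomplementation. -/
def IsOLAuto (hsymm : ∀ x y : X, perp x y → perp y x) (Λ : COS perp → COS perp) : Prop :=
  Function.Bijective Λ ∧
  (∀ A B : COS perp, A.1 ⊆ B.1 ↔ (Λ A).1 ⊆ (Λ B).1) ∧
  (∀ A : COS perp, Λ (orthoCOS perp hsymm A) = orthoCOS perp hsymm (Λ A))

/-- The group of automorphisms of the orthogonality space `(X, perp)`, as a
subgroup of the permutation group of `X`. -/
def AutGroup : Subgroup (Equiv.Perm X) where
  carrier := {φ | ∀ x y : X, perp x y ↔ perp (φ x) (φ y)}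
  one_mem' := fun _ _ => Iff.rfl
  mul_mem' := by
    intro φ ψ hφ hψ x y
    exact (hψ x y).trans (hφ (ψ x) (ψ y))
  inv_mem' := by
    intro φ hφ x y
    simpa using (hφ (φ⁻¹ x) (φ⁻¹ y)).symm

lemma ortho_image (φ : Equiv.Perm X) (hφ : ∀ x y : X, perp x y ↔ perp (φ x) (φ y))
    (A : Set X) : ortho perp (⇑φ '' A) = ⇑φ '' ortho perp A := by
  ext e
  constructor
  · intro he
    refine ⟨φ.symm e, fun a ha => ?_, φ.apply_symm_apply e⟩
    have h1 := he (φ a) ⟨a, ha, rfl⟩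
    have h2 := (hφ (φ.symm e) a).mpr
    rw [φ.apply_symm_apply] at h2
    exact h2 h1
  · rintro ⟨x, hx, rfl⟩ b ⟨a, ha, rfl⟩
    exact (hφ x a).mp (hx a ha)

lemma orthoClosed_image (φ : Equiv.Perm X) (hφ : ∀ x y : X, perp x y ↔ perp (φ x) (φ y))
    {A : Set X} (hA : OrthoClosed perp A) : OrthoClosed perp (⇑φ '' A) := by
  unfold OrthoClosed at *
  rw [ortho_image perp φ hφ, ortho_image perp φ hφ, hA]

/-- The map `φ̄` on `C(X, ⊥)` induced by an automorphism `φ` of `(X, ⊥)`: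
`A ↦ {φ e : e ∈ A}`. -/
def barCOS (φ : AutGroup perp) (A : COS perp) : COS perp :=
  ⟨⇑(φ : Equiv.Perm X) '' A.1, orthoClosed_image perp (φ : Equiv.Perm X) φ.2 A.2⟩


section Aux

variable {X : Type*}

lemma cosExt {perp : X → X → Prop} {A B : COS perp} (h : A.1 = B.1) : A = B :=
  Subtype.ext h

lemma orthoClosed_empty (perp : X → X → Prop) (hirr : ∀ x : X, ¬ perp x x) :
    OrthoClosed perp (∅ : Set X) := by
  unfold OrthoClosed ortho
  ext e
  simp only [Set.mem_setOf_eq, Set.mem_empty_iff_false, iff_false]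
  intro h
  exact hirr e (h e (fun a ha => ha.elim))

lemma barCOS_mul' (perp : X → X → Prop) (φ ψ : AutGroup perp) :
    barCOS perp (φ * ψ) = barCOS perp φ ∘ barCOS perp ψ := by
  funext A
  apply cosExt
  show ⇑((φ : Equiv.Perm X) * (ψ : Equiv.Perm X)) '' A.1 = _
  simp [barCOS, Set.image_image, Equiv.Perm.mul_apply]

lemma barCOS_one (perp : X → X → Prop) :
    barCOS perp (1 : AutGroup perp) = id := by
  funext A
  apply cosExt
  show ⇑(1 : Equiv.Perm X) '' A.1 = A.1
  simp

lemma Lambda_bot (perp : X → X → Prop)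
    (hsymm : ∀ x y : X, perp x y → perp y x)
    (hirr : ∀ x : X, ¬ perp x x)
    {Λ : COS perp → COS perp} (hΛ : IsOLAuto perp hsymm Λ) :
    Λ ⟨∅, orthoClosed_empty perp hirr⟩ = ⟨∅, orthoClosed_empty perp hirr⟩ := by
  obtain ⟨⟨hinj, hsurj⟩, hord, _⟩ := hΛ
  obtain ⟨B, hB⟩ := hsurj ⟨∅, orthoClosed_empty perp hirr⟩
  apply cosExt
  have h1 : (⟨∅, orthoClosed_empty perp hirr⟩ : COS perp).1 ⊆ B.1 := by
    intro x hx; exact hx.elim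
  have h2 := (hord _ B).mp h1
  rw [hB] at h2
  exact Set.subset_eq_empty h2 rfl

/-- Λ maps singletons to singletons. -/
lemma Lambda_singleton (perp : X → X → Prop)
    (hsymm : ∀ x y : X, perp x y → perp y x)
    (hirr : ∀ x : X, ¬ perp x x)
    (hpc : ∀ e : X, OrthoClosed perp {e})
    {Λ : COS perp → COS perp} (hΛ : IsOLAuto perp hsymm Λ) (e : X) :
    ∃ f : X, Λ ⟨{e}, hpc e⟩ = ⟨{f}, hpc f⟩ := by
  obtain ⟨⟨hinj, hsurj⟩, hord, _⟩ := hΛ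
  -- Λ {e} is nonempty
  have hne : (Λ ⟨{e}, hpc e⟩).1.Nonempty := by
    rcases Set.eq_empty_or_nonempty (Λ ⟨{e}, hpc e⟩).1 with h | h
    · exfalso
      have : Λ ⟨{e}, hpc e⟩ = Λ ⟨∅, orthoClosed_empty perp hirr⟩ := by
        rw [Lambda_bot perp hsymm hirr ⟨⟨hinj, hsurj⟩, hord, ‹_›⟩]
        exact cosExt h
      have hset : ({e} : Set X) = ∅ := congrArg Subtype.val (hinj this)
      exact Set.singleton_ne_empty e hset
    · exact h
  obtain ⟨f, hf⟩ := hne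
  refine ⟨f, ?_⟩
  obtain ⟨B, hB⟩ := hsurj ⟨{f}, hpc f⟩
  -- B ⊆ {e}
  have hBe : B.1 ⊆ {e} := by
    have : (Λ B).1 ⊆ (Λ ⟨{e}, hpc e⟩).1 := by
      rw [hB]; exact Set.singleton_subset_iff.mpr hf
    exact (hord B ⟨{e}, hpc e⟩).mpr this
  -- B is nonempty
  have hBne : B.1.Nonempty := by
    rcases Set.eq_empty_or_nonempty B.1 with h | h
    · exfalso
      have : B = ⟨∅, orthoClosed_empty perp hirr⟩ := cosExt h
      rw [this, Lambda_bot perp hsymm hirr ⟨⟨hinj, hsurj⟩, hord, ‹_›⟩] at hB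
      have hset : (∅ : Set X) = {f} := congrArg Subtype.val hB
      exact Set.singleton_ne_empty f hset.symm
    · exact h
  have : B = ⟨{e}, hpc e⟩ := by
    apply cosExt
    obtain ⟨x, hx⟩ := hBne
    have hxe : x = e := hBe hx
    apply Set.Subset.antisymm hBe
    intro y hy
    have : y = x := hy.symm ▸ hxe.symm ▸ (Set.mem_singleton_iff.mp hy) ▸ rfl
    simpa [Set.mem_singleton_iff.mp hy, ← hxe] using hx
  rw [← this, hB]

end Aux

/-- For a point-closed orthogonality space, `φ ↦ φ̄` is a group
isomorphism from `Aut(X, ⊥)` onto the group of all ortholattice automorphisms of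
`C(X, ⊥)`. -/
theorem stmt2 {X : Type*} [Nonempty X] (perp : X → X → Prop)
    (hsymm : ∀ x y : X, perp x y → perp y x)
    (hirr : ∀ x : X, ¬ perp x x)
    (hpc : ∀ e : X, OrthoClosed perp {e}) :
    -- `φ̄` is an ortholattice automorphism of `C(X, ⊥)` for every `φ ∈ Aut(X, ⊥)`
    (∀ φ : AutGroup perp, IsOLAuto perp hsymm (barCOS perp φ)) ∧
    -- `φ ↦ φ̄` is multiplicative
    (∀ φ ψ : AutGroup perp, barCOS perp (φ * ψ) = barCOS perp φ ∘ barCOS perp ψ) ∧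
    -- `φ ↦ φ̄` is injective
    Function.Injective (barCOS perp) ∧
    -- `φ ↦ φ̄` is onto the group of all ortholattice automorphisms of `C(X, ⊥)`
    (∀ Λ : COS perp → COS perp, IsOLAuto perp hsymm Λ →
      ∃ φ : AutGroup perp, barCOS perp φ = Λ) := by
  constructor
  · -- each φ̄ is an ortholattice automorphism
    intro φ
    refine ⟨?_, ?_, ?_⟩
    · constructor
      · intro A B hAB
        apply cosExt
        have := congrArg Subtype.val hAB
        exact (Set.image_injective.mpr (φ : Equiv.Perm X).injective) this
      · intro B
        refine ⟨barCOS perp φ⁻¹ B, ?_⟩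
        have := congrFun (barCOS_mul' perp φ φ⁻¹) B
        rw [mul_inv_cancel, barCOS_one] at this
        exact this.symm
    · intro A B
      exact (Set.image_subset_image_iff (φ : Equiv.Perm X).injective).symm
    · intro A
      apply cosExt
      exact (ortho_image perp (φ : Equiv.Perm X) φ.2 A.1).symm
  refine ⟨barCOS_mul' perp, ?_, ?_⟩
  · -- injective
    intro φ ψ h
    apply Subtype.ext
    apply Equiv.ext
    intro e
    have := congrArg Subtype.val (congrFun h ⟨{e}, hpc e⟩)
    simp only [barCOS, Set.image_singleton] at this
    exact Set.singleton_eq_singleton_iff.mp this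
  · -- surjective
    intro Λ hΛ
    choose f hf using Lambda_singleton perp hsymm hirr hpc hΛ
    obtain ⟨⟨hinj, hsurj⟩, hord, horth⟩ := hΛ
    -- f is bijective
    have hfinj : Function.Injective f := by
      intro a b hab
      have : Λ ⟨{a}, hpc a⟩ = Λ ⟨{b}, hpc b⟩ := by rw [hf a, hf b, hab]
      have := congrArg Subtype.val (hinj this)
      exact Set.singleton_eq_singleton_iff.mp this
    have hfsurj : Function.Surjective f := by
      intro y
      obtain ⟨B, hB⟩ := hsurj ⟨{y}, hpc y⟩
      -- B is nonempty
      have hBne : B.1.Nonempty := by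
        rcases Set.eq_empty_or_nonempty B.1 with h | h
        · exfalso
          have hb : B = ⟨∅, orthoClosed_empty perp hirr⟩ := cosExt h
          rw [hb, Lambda_bot perp hsymm hirr ⟨⟨hinj, hsurj⟩, hord, horth⟩] at hB
          have hset : (∅ : Set X) = {y} := congrArg Subtype.val hB
          exact Set.singleton_ne_empty y hset.symm
        · exact h
      obtain ⟨e, he⟩ := hBne
      refine ⟨e, ?_⟩
      -- {e} ⊆ B, so Λ{e} ⊆ {y}, and Λ{e} = {f e} nonempty, so f e = y
      have h1 : ({e} : Set X) ⊆ B.1 := Set.singleton_subset_iff.mpr he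
      have h2 := (hord ⟨{e}, hpc e⟩ B).mp h1
      rw [hf e, hB] at h2
      exact h2 rfl
    let φ : Equiv.Perm X := Equiv.ofBijective f ⟨hfinj, hfsurj⟩
    -- the key orthogonality equivalence
    have hperp : ∀ x y : X, perp x y ↔ perp (f x) (f y) := by
      intro x y
      have key : ∀ a b : X, (perp a b ↔ ({a} : Set X) ⊆ ortho perp {b}) := by
        intro a b
        constructor
        · intro h c hc
          rw [Set.mem_singleton_iff.mp hc]
          intro d hd
          rw [Set.mem_singleton_iff.mp hd]; exact h
        · intro h
          exact h rfl b rfl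
      rw [key x y, key (f x) (f y)]
      have h3 := hord ⟨{x}, hpc x⟩ (orthoCOS perp hsymm ⟨{y}, hpc y⟩)
      have h4 : Λ (orthoCOS perp hsymm ⟨{y}, hpc y⟩) = orthoCOS perp hsymm ⟨{f y}, hpc (f y)⟩ :=
        (horth _).trans (congrArg (orthoCOS perp hsymm) (hf y))
      rw [h4, hf x] at h3
      exact h3
    have hφmem : φ ∈ AutGroup perp := hperp
    refine ⟨⟨φ, hφmem⟩, ?_⟩
    funext A
    apply cosExt
    show f '' A.1 = (Λ A).1
    ext x
    constructor
    · rintro ⟨e, he, rfl⟩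
      have h1 : ({e} : Set X) ⊆ A.1 := Set.singleton_subset_iff.mpr he
      have h2 := (hord ⟨{e}, hpc e⟩ A).mp h1
      rw [hf e] at h2
      exact h2 rfl
    · intro hx
      obtain ⟨e, rfl⟩ := hfsurj x
      refine ⟨e, ?_, rfl⟩
      have h2 : (Λ ⟨{e}, hpc e⟩).1 ⊆ (Λ A).1 := by
        rw [hf e]; exact Set.singleton_subset_iff.mpr hx
      have := (hord ⟨{e}, hpc e⟩ A).mpr h2
      exact this rfl
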